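/- arXiv:1811.01456 — 2 statements merged into one kernel-verified Lean document; each statement's English description precedes it below -/
import Mathlib

section
/- If A is an algebra in a congruence-modular variety, then the lattice of compatible superequivalences on A is modular. -/
open Set

variable {α : Type*}

/-- The identity relation (as defined in the older Mathlib). -/
def idRel : Set (α × α) :=
  { p : α × α | p.1 = p.2 }

/-- Composition of relations (as defined in the older Mathlib). -/
def compRel (r₁ r₂ : Set (α × α)) : Set (α × α) :=
  { p : α × α | ∃ z : α, (p.1, z) ∈ r₁ ∧ (z, p.2) ∈ r₂ }

/-- An ideal in the lattice of binary relations on a set: nonempty, downward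
closed, and closed under finite unions (= finite joins). -/
def IsIdeal (ℐ : Set (Set (α × α))) : Prop :=
  ℐ.Nonempty ∧ (∀ R ∈ ℐ, ∀ T ⊆ R, T ∈ ℐ) ∧ (∀ R ∈ ℐ, ∀ S ∈ ℐ, R ∪ S ∈ ℐ)

/-- A superequivalence: an ideal of relations containing the diagonal, closed
under relational opposites, and closed under composition of relations. -/
def IsSuperEq (ℐ : Set (Set (α × α))) : Prop :=
  IsIdeal ℐ ∧ idRel ∈ ℐ ∧ (∀ R ∈ ℐ, Prod.swap ⁻¹' R ∈ ℐ) ∧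
    (∀ R ∈ ℐ, ∀ S ∈ ℐ, compRel R S ∈ ℐ)

/-- Composition of ideals of relations: the ideal generated by the compositions
`R ○ S` of members (this generating family is directed, so the generated ideal
is its downward closure). -/
def idealComp (ℐ 𝒥 : Set (Set (α × α))) : Set (Set (α × α)) :=
  {T | ∃ R ∈ ℐ, ∃ S ∈ 𝒥, T ⊆ compRel R S}

/-- Composition of a nonempty list of relations. -/
def listComp : List (Set (α × α)) → Set (α × α)
  | [] => idRel
  | [R] => R
  | R :: S :: l => compRel R (listComp (S :: l))

/-- The ideal of relations generated by a set `G` of relations: everything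
below a finite union of members of `G`. -/
def idealGen (G : Set (Set (α × α))) : Set (Set (α × α)) :=
  {T | ∃ s : Finset (Set (α × α)), ↑s ⊆ G ∧ T ⊆ ⋃₀ ↑s}

/-- The set of finite (nonempty) compositions of relations from `X`. -/
def comps (X : Set (Set (α × α))) : Set (Set (α × α)) :=
  {T | ∃ l : List (Set (α × α)), l ≠ [] ∧ (∀ R ∈ l, R ∈ X) ∧ T = listComp l}

/-- The join of two superequivalences: the ideal generated by all finite
compositions of relations from their union. -/
def seJoin (ℐ 𝒥 : Set (Set (α × α))) : Set (Set (α × α)) :=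
  idealGen (comps (ℐ ∪ 𝒥))

/-- The join of a family of superequivalences. -/
def seSup (S : Set (Set (Set (α × α)))) : Set (Set (α × α)) :=
  idealGen (comps (⋃₀ S))

variable {A : Type*} {ι : Type*} {ar : ι → ℕ}

/-- Terms over a signature (operation symbols `ι` with arities `ar`) in `n` variables. -/
inductive Term (ι : Type*) (ar : ι → ℕ) (n : ℕ) : Type _ where
  | var : Fin n → Term ι ar n
  | app : (i : ι) → (Fin (ar i) → Term ι ar n) → Term ι ar n

/-- Evaluation of a term in an algebra `A` with operations `ops`. -/
def Term.eval {A : Type*} {ι : Type*} {ar : ι → ℕ} {n : ℕ}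
    (ops : ∀ i, (Fin (ar i) → A) → A) (v : Fin n → A) : Term ι ar n → A
  | Term.var k => v k
  | Term.app i ts => ops i fun j => Term.eval ops v (ts j)

/-- Componentwise image of a tuple of relations under an `n`-ary operation. -/
def opImg {A : Type*} {n : ℕ} (w : (Fin n → A) → A) (R : Fin n → Set (A × A)) :
    Set (A × A) :=
  {p | ∃ a b : Fin n → A, (∀ k, (a k, b k) ∈ R k) ∧ p = (w a, w b)}

/-- A set (ideal) of relations on the algebra `A` is compatible if it is closed
under componentwise images of the basic operations. -/
def seCompatible (ops : ∀ i, (Fin (ar i) → A) → A) (ℐ : Set (Set (A × A))) : Prop :=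
  ∀ i, ∀ R : Fin (ar i) → Set (A × A), (∀ k, R k ∈ ℐ) → opImg (ops i) R ∈ ℐ

/-- `m 0, …, m d` is a sequence of Day terms for the algebra `(A, ops)`. -/
def DayTerms (ops : ∀ i, (Fin (ar i) → A) → A) (m : ℕ → Term ι ar 4) (d : ℕ) : Prop :=
  (∀ i ≤ d, ∀ x y : A, (m i).eval ops ![x, y, y, x] = x) ∧
  (∀ x y z w : A, (m 0).eval ops ![x, y, z, w] = x) ∧
  (∀ x y z w : A, (m d).eval ops ![x, y, z, w] = w) ∧
  (∀ i < d, Even i → ∀ x y : A,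
    (m i).eval ops ![x, x, y, y] = (m (i + 1)).eval ops ![x, x, y, y]) ∧
  (∀ i < d, Odd i → ∀ x y z : A,
    (m i).eval ops ![x, y, y, z] = (m (i + 1)).eval ops ![x, y, y, z])

/-! ### auxiliary development -/


section Aux

/-- reversal of a relation -/
abbrev rv (R : Set (α × α)) : Set (α × α) := Prod.swap ⁻¹' R

lemma mem_rv {R : Set (α × α)} {a b : α} : (a, b) ∈ rv R ↔ (b, a) ∈ R := Iff.rfl

lemma mem_cmp {r s : Set (α × α)} {a b : α} :
    (a, b) ∈ compRel r s ↔ ∃ c, (a, c) ∈ r ∧ (c, b) ∈ s := Iff.rfl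

lemma cmp_id (r : Set (α × α)) : compRel r idRel = r := by
  ext ⟨a, b⟩
  constructor
  · rintro ⟨c, h1, h2⟩
    have : c = b := h2
    simpa [this] using h1
  · intro h; exact ⟨b, h, rfl⟩

lemma id_cmp (r : Set (α × α)) : compRel idRel r = r := by
  ext ⟨a, b⟩
  constructor
  · rintro ⟨c, h1, h2⟩
    have : a = c := h1
    simpa [this] using h2
  · intro h; exact ⟨a, rfl, h⟩

lemma rv_cmp (r s : Set (α × α)) : rv (compRel r s) = compRel (rv s) (rv r) := by
  ext ⟨a, b⟩
  exact ⟨fun ⟨c, h1, h2⟩ => ⟨c, h2, h1⟩, fun ⟨c, h1, h2⟩ => ⟨c, h2, h1⟩⟩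

lemma rv_id : rv (idRel : Set (α × α)) = idRel := by
  ext ⟨a, b⟩
  exact ⟨fun h => (show b = a from h).symm, fun h => (show a = b from h).symm⟩

lemma rv_mono {r s : Set (α × α)} (h : r ⊆ s) : rv r ⊆ rv s := fun _ hp => h hp

/-- folded composition of a list of relations -/
def lc (l : List (Set (α × α))) : Set (α × α) := l.foldr compRel idRel

lemma lc_nil : lc ([] : List (Set (α × α))) = idRel := rfl

lemma lc_cons (R : Set (α × α)) (l : List (Set (α × α))) :
    lc (R :: l) = compRel R (lc l) := rfl

lemma listComp_eq_lc : ∀ l : List (Set (α × α)), listComp l = lc l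
  | [] => rfl
  | [R] => by simp [listComp, lc, cmp_id]
  | R :: S :: l => by
      rw [listComp, listComp_eq_lc (S :: l)]; rfl

lemma compRel_assoc (r s t : Set (α × α)) :
    compRel (compRel r s) t = compRel r (compRel s t) := by
  ext ⟨a, b⟩
  constructor
  · rintro ⟨c, ⟨e, h1, h2⟩, h3⟩
    exact ⟨e, h1, c, h2, h3⟩
  · rintro ⟨e, h1, c, h2, h3⟩
    exact ⟨c, ⟨e, h1, h2⟩, h3⟩

lemma lc_append (l₁ l₂ : List (Set (α × α))) :
    lc (l₁ ++ l₂) = compRel (lc l₁) (lc l₂) := by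
  induction l₁ with
  | nil => simp [lc_nil, id_cmp]
  | cons R l ih => simp [lc_cons, ih, compRel_assoc]

lemma rv_lc : ∀ l : List (Set (α × α)), rv (lc l) = lc (l.reverse.map rv)
  | [] => by simp [lc_nil, rv_id]
  | R :: l => by
      rw [lc_cons, rv_cmp, rv_lc l, List.reverse_cons, List.map_append, lc_append]
      simp [lc, cmp_id]

/-- chain lemma: compose pointwise steps -/
lemma lc_chain (E : ℕ → Set (α × α)) (f : ℕ → α) :
    ∀ D : ℕ, (∀ i < D, (f i, f (i + 1)) ∈ E i) →
      (f 0, f D) ∈ lc ((List.range D).map E) := by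
  intro D
  induction D with
  | zero => intro _; exact rfl
  | succ D ih =>
      intro h
      rw [List.range_succ, List.map_append, lc_append]
      exact ⟨f D, ih (fun i hi => h i (by omega)), by
        simpa [lc, cmp_id] using h D (by omega)⟩

lemma lc_map_rel (F : α → α) (G : Set (α × α) → Set (α × α))
    (hG : ∀ Q : Set (α × α), ∀ u v : α, (u, v) ∈ Q → (F u, F v) ∈ G Q) :
    ∀ l : List (Set (α × α)), ∀ u v : α, (u, v) ∈ lc l → (F u, F v) ∈ lc (l.map G) := by
  intro l
  induction l with
  | nil =>
      intro u v h
      have : u = v := h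
      subst this; exact rfl
  | cons Q l ih =>
      rintro u v ⟨c, h1, h2⟩
      exact ⟨F c, hG Q u c h1, ih c v h2⟩

lemma lc_mem_of_forall_mem {w : Set (Set (α × α))} (hw : IsSuperEq w) :
    ∀ l : List (Set (α × α)), (∀ R ∈ l, R ∈ w) → lc l ∈ w := by
  intro l
  induction l with
  | nil => intro _; exact hw.2.1
  | cons R l ih =>
      intro h
      exact hw.2.2.2 R (h R (by simp)) (lc l) (ih fun Q hQ => h Q (by simp [hQ]))

end Aux
section Aux2
open scoped Classical

variable {α : Type*}

/-! ### ideal generated by comps -/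

lemma idealGen_down {G : Set (Set (α × α))} {T U : Set (α × α)}
    (hU : U ∈ idealGen G) (hT : T ⊆ U) : T ∈ idealGen G := by
  obtain ⟨s, h1, h2⟩ := hU
  exact ⟨s, h1, hT.trans h2⟩

lemma idealGen_gen {G : Set (Set (α × α))} {C T : Set (α × α)}
    (hC : C ∈ G) (hT : T ⊆ C) : T ∈ idealGen G := by
  refine ⟨{C}, by simpa using hC, ?_⟩
  simpa using hT

lemma idealGen_union {G : Set (Set (α × α))} {T U : Set (α × α)}
    (hT : T ∈ idealGen G) (hU : U ∈ idealGen G) : T ∪ U ∈ idealGen G := by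
  obtain ⟨s, hs1, hs2⟩ := hT
  obtain ⟨t, ht1, ht2⟩ := hU
  refine ⟨s ∪ t, ?_, ?_⟩
  · intro C hC
    rcases (by simpa using hC : C ∈ s ∨ C ∈ t) with h | h
    · exact hs1 h
    · exact ht1 h
  · intro p hp
    rcases hp with hp | hp
    · obtain ⟨C, hC, hpC⟩ := hs2 hp
      exact ⟨C, by simp [Finset.mem_union]; left; exact_mod_cast hC, hpC⟩
    · obtain ⟨C, hC, hpC⟩ := ht2 hp
      exact ⟨C, by simp [Finset.mem_union]; right; exact_mod_cast hC, hpC⟩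

lemma comps_comp {X : Set (Set (α × α))} {C₁ C₂ : Set (α × α)}
    (h1 : C₁ ∈ comps X) (h2 : C₂ ∈ comps X) : compRel C₁ C₂ ∈ comps X := by
  obtain ⟨l₁, hne₁, hm₁, rfl⟩ := h1
  obtain ⟨l₂, hne₂, hm₂, rfl⟩ := h2
  refine ⟨l₁ ++ l₂, by simp [hne₁], ?_, ?_⟩
  · intro R hR
    rcases List.mem_append.1 hR with h | h
    · exact hm₁ R h
    · exact hm₂ R h
  · rw [listComp_eq_lc, listComp_eq_lc, listComp_eq_lc, lc_append]

lemma comps_rv {X : Set (Set (α × α))} (hX : ∀ R ∈ X, rv R ∈ X) {C : Set (α × α)}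
    (hC : C ∈ comps X) : rv C ∈ comps X := by
  obtain ⟨l, hne, hm, rfl⟩ := hC
  refine ⟨l.reverse.map rv, by simpa using hne, ?_, ?_⟩
  · intro R hR
    obtain ⟨Q, hQ, rfl⟩ := List.mem_map.1 hR
    exact hX Q (hm Q (List.mem_reverse.1 hQ))
  · rw [listComp_eq_lc, listComp_eq_lc, rv_lc]

lemma idealGen_comp {X : Set (Set (α × α))} {T U : Set (α × α)}
    (hT : T ∈ idealGen (comps X)) (hU : U ∈ idealGen (comps X)) :
    compRel T U ∈ idealGen (comps X) := by
  obtain ⟨s, hs1, hs2⟩ := hT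
  obtain ⟨t, ht1, ht2⟩ := hU
  refine ⟨(s ×ˢ t).image fun q => compRel q.1 q.2, ?_, ?_⟩
  · intro C hC
    simp only [Finset.coe_image, Set.mem_image, Finset.mem_coe, Finset.mem_product] at hC
    obtain ⟨⟨C₁, C₂⟩, ⟨hC₁, hC₂⟩, rfl⟩ := hC
    exact comps_comp (hs1 hC₁) (ht1 hC₂)
  · rintro ⟨a, b⟩ ⟨c, h1, h2⟩
    obtain ⟨C₁, hC₁, hp1⟩ := hs2 h1
    obtain ⟨C₂, hC₂, hp2⟩ := ht2 h2
    refine ⟨compRel C₁ C₂, ?_, ⟨c, hp1, hp2⟩⟩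
    simp only [Finset.coe_image, Set.mem_image, Finset.mem_coe, Finset.mem_product]
    exact ⟨(C₁, C₂), ⟨by exact_mod_cast hC₁, by exact_mod_cast hC₂⟩, rfl⟩

lemma idealGen_rv {X : Set (Set (α × α))} (hX : ∀ R ∈ X, rv R ∈ X) {T : Set (α × α)}
    (hT : T ∈ idealGen (comps X)) : rv T ∈ idealGen (comps X) := by
  obtain ⟨s, hs1, hs2⟩ := hT
  refine ⟨s.image rv, ?_, ?_⟩
  · intro C hC
    simp only [Finset.coe_image, Set.mem_image, Finset.mem_coe] at hC
    obtain ⟨C', hC', rfl⟩ := hC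
    exact comps_rv hX (hs1 hC')
  · rintro ⟨a, b⟩ hab
    obtain ⟨C, hC, hpC⟩ := hs2 hab
    exact ⟨rv C, by
      simp only [Finset.coe_image, Set.mem_image, Finset.mem_coe]
      exact ⟨C, by exact_mod_cast hC, rfl⟩, hpC⟩

end Aux2
section Aux3
open scoped Classical

variable {A : Type*} {ι : Type*} {ar : ι → ℕ}

lemma opImg_intro {n : ℕ} (w : (Fin n → A) → A) (R : Fin n → Set (A × A))
    (a b : Fin n → A) (h : ∀ k, (a k, b k) ∈ R k) : (w a, w b) ∈ opImg w R :=
  ⟨a, b, h, rfl⟩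

lemma opImg_term_mem (ops : ∀ i, (Fin (ar i) → A) → A)
    {w : Set (Set (A × A))} (hw : IsSuperEq w) (hwc : seCompatible ops w)
    {n : ℕ} (t : Term ι ar n) (P : Fin n → Set (A × A)) (hP : ∀ k, P k ∈ w) :
    opImg (fun v => t.eval ops v) P ∈ w := by
  induction t with
  | var k =>
      refine hw.1.2.1 _ (hP k) _ ?_
      rintro ⟨p, q⟩ ⟨a, b, hab, hpq⟩
      have : (p, q) = (a k, b k) := by simpa [Term.eval] using hpq
      rw [this]; exact hab k
  | app i ts ih =>
      refine hw.1.2.1 _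
        (hwc i (fun j => opImg (fun v => (ts j).eval ops v) P) (fun j => ih j)) _ ?_
      rintro ⟨p, q⟩ ⟨a, b, hab, hpq⟩
      have : (p, q) = (ops i fun j => (ts j).eval ops a, ops i fun j => (ts j).eval ops b) := by
        simpa [Term.eval] using hpq
      rw [this]
      exact opImg_intro (ops i) _ _ _ fun j => ⟨a, b, hab, rfl⟩

end Aux3
section Aux4

variable {A : Type*} {ι : Type*} {ar : ι → ℕ}
variable (ops : ∀ i, (Fin (ar i) → A) → A) (m : ℕ → Term ι ar 4)

/-- evaluation of the `i`-th Day term -/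
def ev (i : ℕ) : (Fin 4 → A) → A := fun v => (m i).eval ops v

/-- image of a quadruple of relations under the `i`-th Day term -/
def timg (i : ℕ) (P₁ P₂ P₃ P₄ : Set (A × A)) : Set (A × A) :=
  opImg (ev ops m i) ![P₁, P₂, P₃, P₄]

lemma timg_intro (i : ℕ) {P₁ P₂ P₃ P₄ : Set (A × A)} {a₁ a₂ a₃ a₄ b₁ b₂ b₃ b₄ : A}
    (h₁ : (a₁, b₁) ∈ P₁) (h₂ : (a₂, b₂) ∈ P₂) (h₃ : (a₃, b₃) ∈ P₃) (h₄ : (a₄, b₄) ∈ P₄) :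
    (ev ops m i ![a₁, a₂, a₃, a₄], ev ops m i ![b₁, b₂, b₃, b₄]) ∈ timg ops m i P₁ P₂ P₃ P₄ := by
  refine opImg_intro _ _ _ _ ?_
  intro k
  fin_cases k <;> simpa

lemma timg_mem {w : Set (Set (A × A))} (hw : IsSuperEq w) (hwc : seCompatible ops w)
    (i : ℕ) {P₁ P₂ P₃ P₄ : Set (A × A)}
    (h₁ : P₁ ∈ w) (h₂ : P₂ ∈ w) (h₃ : P₃ ∈ w) (h₄ : P₄ ∈ w) :
    timg ops m i P₁ P₂ P₃ P₄ ∈ w := by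
  refine opImg_term_mem ops hw hwc (m i) _ ?_
  intro k
  fin_cases k <;> simpa

end Aux4
section Aux5
open scoped Classical

variable {A : Type*} {ι : Type*} {ar : ι → ℕ}
variable (ops : ∀ i, (Fin (ar i) → A) → A) (m : ℕ → Term ι ar 4)

/-- the z-certificate relation containing the pairs `(e i, g i)` -/
def VzRel (T : Set (A × A)) (i : ℕ) : Set (A × A) :=
  compRel (timg ops m i idRel idRel idRel (rv T))
    (rv (timg ops m i idRel idRel (rv T) (rv T)))

/-- the list of relations along which `(e i, g i)` travels -/
def liList (S S₂ : Set (A × A)) (xs rest : List (Set (A × A))) (i : ℕ) :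
    List (Set (A × A)) :=
  ((xs.reverse.map rv).map fun Q => timg ops m i idRel Q idRel idRel) ++
    (compRel (timg ops m i idRel (rv S) idRel idRel) (timg ops m i idRel idRel S₂ idRel)) ::
      rest.map fun Q => timg ops m i idRel idRel Q idRel

/-- the step relation -/
def erRel (S S₂ T : Set (A × A)) (xs rest : List (Set (A × A))) (i : ℕ) : Set (A × A) :=
  VzRel ops m T i ∩ lc (liList ops m S S₂ xs rest i)

def bigRel (S S₂ T : Set (A × A)) (xs rest : List (Set (A × A))) (d : ℕ) : Set (A × A) :=
  lc ((List.range d).map fun i =>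
    if Even i then
      compRel (erRel ops m S S₂ T xs rest i) (rv (erRel ops m S S₂ T xs rest (i + 1)))
    else idRel)

variable {x y z : Set (Set (A × A))}

lemma lc_mem_z (hz : IsSuperEq z) {l : List (Set (A × A))} (h : ∀ R ∈ l, R ∈ z) :
    lc l ∈ z := lc_mem_of_forall_mem hz l h

lemma idealGen_lc {X : Set (Set (A × A))} (hid : idRel ∈ X) :
    ∀ l : List (Set (A × A)), (∀ C ∈ l, C ∈ idealGen (comps X)) →
      lc l ∈ idealGen (comps X) := by
  intro l
  induction l with
  | nil =>
      intro _
      exact idealGen_gen ⟨[idRel], by simp, by simpa using hid, rfl⟩ subset_rfl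
  | cons C l ih =>
      intro h
      exact idealGen_comp (h C (by simp)) (ih fun Q hQ => h Q (by simp [hQ]))

lemma mem_J_of_gen {x w : Set (Set (A × A))} {R : Set (A × A)} (h : R ∈ x ∪ w) :
    R ∈ seJoin x w :=
  idealGen_gen ⟨[R], by simp, by simpa using h, rfl⟩ subset_rfl

lemma dayStep {d : ℕ} (hday : DayTerms ops m d)
    (hx : IsSuperEq x) (hxc : seCompatible ops x)
    (hy : IsSuperEq y) (hyc : seCompatible ops y)
    (hz : IsSuperEq z) (hzc : seCompatible ops z)
    (hxz : x ⊆ z) {n : ℕ}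
    (IH : ∀ l : List (Set (A × A)), (∀ Q ∈ l, Q ∈ x ∪ y) →
      l.countP (fun R => decide (R ∉ x)) ≤ n → ∀ T ∈ z, T ∩ lc l ∈ seJoin x (y ∩ z))
    (S S₂ : Set (A × A)) (xs rest : List (Set (A × A)))
    (hS : S ∈ y) (hS₂ : S₂ ∈ y) (hxs : ∀ Q ∈ xs, Q ∈ x)
    (hrest : ∀ Q ∈ rest, Q ∈ x ∪ y)
    (hcnt : rest.countP (fun R => decide (R ∉ x)) + 1 ≤ n)
    (T : Set (A × A)) (hT : T ∈ z) :
    T ∩ lc (S :: (xs ++ S₂ :: rest)) ∈ seJoin x (y ∩ z) := by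
  have hidx : (idRel : Set (A × A)) ∈ x := hx.2.1
  have hidy : (idRel : Set (A × A)) ∈ y := hy.2.1
  have hidz : (idRel : Set (A × A)) ∈ z := hz.2.1
  -- each step relation is in the join
  have hεJ : ∀ i : ℕ, erRel ops m S S₂ T xs rest i ∈ seJoin x (y ∩ z) := by
    intro i
    have hVz : VzRel ops m T i ∈ z := by
      refine hz.2.2.2 _ ?_ _ (hz.2.2.1 _ ?_)
      · exact timg_mem ops m hz hzc i hidz hidz hidz (hz.2.2.1 _ hT)
      · exact timg_mem ops m hz hzc i hidz hidz (hz.2.2.1 _ hT) (hz.2.2.1 _ hT)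
    have hmem : ∀ Q ∈ liList ops m S S₂ xs rest i, Q ∈ x ∪ y := by
      intro Q hQ
      rw [liList, List.mem_append] at hQ
      rcases hQ with hQ | hQ
      · obtain ⟨Q', hQ', rfl⟩ := List.mem_map.1 hQ
        obtain ⟨Q'', hQ'', rfl⟩ := List.mem_map.1 hQ'
        have : Q'' ∈ x := hxs Q'' (List.mem_reverse.1 hQ'')
        exact Or.inl (timg_mem ops m hx hxc i hidx (hx.2.2.1 _ this) hidx hidx)
      · rcases List.mem_cons.1 hQ with rfl | hQ
        · refine Or.inr (hy.2.2.2 _ ?_ _ ?_)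
          · exact timg_mem ops m hy hyc i hidy (hy.2.2.1 _ hS) hidy hidy
          · exact timg_mem ops m hy hyc i hidy hidy hS₂ hidy
        · obtain ⟨Q', hQ', rfl⟩ := List.mem_map.1 hQ
          rcases hrest Q' hQ' with h | h
          · exact Or.inl (timg_mem ops m hx hxc i hidx hidx h hidx)
          · exact Or.inr (timg_mem ops m hy hyc i hidy hidy h hidy)
    have hcount : (liList ops m S S₂ xs rest i).countP (fun R => decide (R ∉ x)) ≤ n := by
      rw [liList, List.countP_append, List.countP_cons]
      have h1 : ((xs.reverse.map rv).map fun Q =>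
          timg ops m i idRel Q idRel idRel).countP (fun R => decide (R ∉ x)) = 0 := by
        rw [List.countP_eq_zero]
        intro Q hQ
        obtain ⟨Q', hQ', rfl⟩ := List.mem_map.1 hQ
        obtain ⟨Q'', hQ'', rfl⟩ := List.mem_map.1 hQ'
        have : Q'' ∈ x := hxs Q'' (List.mem_reverse.1 hQ'')
        simpa using timg_mem ops m hx hxc i hidx (hx.2.2.1 _ this) hidx hidx
      have h2 : (rest.map fun Q =>
          timg ops m i idRel idRel Q idRel).countP (fun R => decide (R ∉ x)) ≤
          rest.countP (fun R => decide (R ∉ x)) := by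
        rw [List.countP_map]
        refine List.countP_mono_left ?_
        intro Q hQ h
        simp only [Function.comp, decide_eq_true_eq] at h ⊢
        intro hQx
        exact h (timg_mem ops m hx hxc i hidx hidx hQx hidx)
      rw [h1]
      split <;> omega
    exact IH _ hmem hcount _ hVz
  -- the big relation is in the join
  have hop : ∀ R ∈ x ∪ (y ∩ z), rv R ∈ x ∪ (y ∩ z) := by
    rintro R (h | ⟨h1, h2⟩)
    · exact Or.inl (hx.2.2.1 _ h)
    · exact Or.inr ⟨hy.2.2.1 _ h1, hz.2.2.1 _ h2⟩
  have hbigJ : bigRel ops m S S₂ T xs rest d ∈ seJoin x (y ∩ z) := by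
    refine idealGen_lc (Or.inl hidx) _ ?_
    intro C hC
    obtain ⟨i, _, rfl⟩ := List.mem_map.1 hC
    by_cases hEv : Even i
    · simp only [if_pos hEv]
      exact idealGen_comp (hεJ i) (idealGen_rv hop (hεJ (i + 1)))
    · simp only [if_neg hEv]
      exact mem_J_of_gen (Or.inl hidx)
  refine idealGen_down hbigJ ?_
  -- the pointwise containment
  rintro ⟨c, dd⟩ ⟨hcd, hlc⟩
  rw [lc_cons] at hlc
  obtain ⟨p, hcp, hpd⟩ := hlc
  rw [lc_append] at hpd
  obtain ⟨b, hpb, hbd⟩ := hpd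
  rw [lc_cons] at hbd
  obtain ⟨q, hbq, hqd⟩ := hbd
  -- the key claim
  have key : ∀ j, j ≤ d →
      (ev ops m j ![c, b, b, dd], ev ops m j ![c, c, dd, dd]) ∈
        erRel ops m S S₂ T xs rest j := by
    intro j hj
    constructor
    · -- membership in the z-certificate
      refine ⟨c, ?_, ?_⟩
      · have h := timg_intro ops m j (P₁ := idRel) (P₂ := idRel) (P₃ := idRel)
          (P₄ := rv T) (a₁ := c) (a₂ := b) (a₃ := b) (a₄ := dd)
          (b₁ := c) (b₂ := b) (b₃ := b) (b₄ := c) rfl rfl rfl hcd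
        rwa [show ev ops m j ![c, b, b, c] = c from hday.1 j hj c b] at h
      · rw [mem_rv]
        have h := timg_intro ops m j (P₁ := idRel) (P₂ := idRel) (P₃ := rv T)
          (P₄ := rv T) (a₁ := c) (a₂ := c) (a₃ := dd) (a₄ := dd)
          (b₁ := c) (b₂ := c) (b₃ := c) (b₄ := c) rfl rfl hcd hcd
        rwa [show ev ops m j ![c, c, c, c] = c from hday.1 j hj c c] at h
    · -- membership in the composition list
      rw [liList, lc_append, lc_cons]
      refine ⟨ev ops m j ![c, p, b, dd], ?_, ev ops m j ![c, c, q, dd], ?_, ?_⟩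
      · -- walk in slot 2 from b back to p
        have hbp : (b, p) ∈ lc (xs.reverse.map rv) := by
          rw [← rv_lc]
          exact hpb
        exact lc_map_rel (fun t => ev ops m j ![c, t, b, dd])
          (fun Q => timg ops m j idRel Q idRel idRel)
          (fun Q u v huv => timg_intro ops m j rfl huv rfl rfl)
          (xs.reverse.map rv) b p hbp
      · -- the merged middle step
        refine ⟨ev ops m j ![c, c, b, dd], ?_, ?_⟩
        · exact timg_intro ops m j rfl (mem_rv.2 hcp) rfl rfl
        · exact timg_intro ops m j rfl rfl hbq rfl
      · -- walk in slot 3 from q to dd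
        exact lc_map_rel (fun t => ev ops m j ![c, c, t, dd])
          (fun Q => timg ops m j idRel idRel Q idRel)
          (fun Q u v huv => timg_intro ops m j rfl rfl huv rfl)
          rest q dd hqd
  -- assemble the chain
  have hchain : (ev ops m 0 ![c, b, b, dd], ev ops m d ![c, b, b, dd]) ∈
      bigRel ops m S S₂ T xs rest d := by
    refine lc_chain _ (fun i => ev ops m i ![c, b, b, dd]) d ?_
    intro i hi
    by_cases hEv : Even i
    · simp only [if_pos hEv]
      refine ⟨ev ops m i ![c, c, dd, dd], key i (le_of_lt hi), ?_⟩
      rw [mem_rv]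
      have hg : ev ops m i ![c, c, dd, dd] = ev ops m (i + 1) ![c, c, dd, dd] :=
        hday.2.2.2.1 i hi hEv c dd
      rw [hg]
      exact key (i + 1) hi
    · simp only [if_neg hEv]
      have : ev ops m i ![c, b, b, dd] = ev ops m (i + 1) ![c, b, b, dd] :=
        hday.2.2.2.2 i hi (Nat.not_even_iff_odd.1 hEv) c b dd
      exact this
  rw [show ev ops m 0 ![c, b, b, dd] = c from hday.2.1 c b b dd,
    show ev ops m d ![c, b, b, dd] = dd from hday.2.2.1 c b b dd] at hchain
  exact hchain

end Aux5
section Aux6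
open scoped Classical

variable {A : Type*} {ι : Type*} {ar : ι → ℕ}
variable (ops : ∀ i, (Fin (ar i) → A) → A) (m : ℕ → Term ι ar 4)
variable {x y z : Set (Set (A × A))}

lemma exists_split {β : Type*} (P : β → Prop) :
    ∀ l : List β, ¬ (∀ Q ∈ l, P Q) →
      ∃ xs S₂ rest, l = xs ++ S₂ :: rest ∧ (∀ Q ∈ xs, P Q) ∧ ¬ P S₂ := by
  intro l
  induction l with
  | nil => intro h; exact absurd (by simp) h
  | cons Q l ih =>
      intro h
      by_cases hQ : P Q
      · have h' : ¬ ∀ R ∈ l, P R := by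
          intro hl
          refine h ?_
          intro R hR
          rcases List.mem_cons.1 hR with rfl | hR
          · exact hQ
          · exact hl R hR
        obtain ⟨xs, S₂, rest, rfl, h1, h2⟩ := ih h'
        refine ⟨Q :: xs, S₂, rest, rfl, ?_, h2⟩
        intro R hR
        rcases List.mem_cons.1 hR with rfl | hR
        · exact hQ
        · exact h1 R hR
      · exact ⟨[], Q, l, rfl, by simp, hQ⟩

lemma dayMain {d : ℕ} (hday : DayTerms ops m d)
    (hx : IsSuperEq x) (hxc : seCompatible ops x)
    (hy : IsSuperEq y) (hyc : seCompatible ops y)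
    (hz : IsSuperEq z) (hzc : seCompatible ops z)
    (hxz : x ⊆ z) :
    ∀ n : ℕ, ∀ l : List (Set (A × A)), (∀ R ∈ l, R ∈ x ∪ y) →
      l.countP (fun R => decide (R ∉ x)) ≤ n →
      ∀ T ∈ z, T ∩ lc l ∈ seJoin x (y ∩ z) := by
  intro n
  induction n with
  | zero =>
      intro l hm hc T hT
      have hall : ∀ R ∈ l, R ∈ x := by
        intro R hR
        have := List.countP_eq_zero.1 (Nat.le_zero.1 hc) R hR
        simpa using this
      exact idealGen_down (mem_J_of_gen (Or.inl (lc_mem_of_forall_mem hx l hall)))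
        inter_subset_right
  | succ n ih =>
      intro l
      induction l with
      | nil =>
          intro _ _ T hT
          exact idealGen_down (mem_J_of_gen (Or.inl hx.2.1)) inter_subset_right
      | cons R l' ihl =>
          intro hm hc T hT
          have hm' : ∀ Q ∈ l', Q ∈ x ∪ y := fun Q hQ => hm Q (List.mem_cons_of_mem _ hQ)
          by_cases hRx : R ∈ x
          · -- peel an x-letter on the left
            have hc' : l'.countP (fun R => decide (R ∉ x)) ≤ n + 1 := by
              rw [List.countP_cons] at hc
              omega
            have hT' : compRel (rv R) T ∈ z := hz.2.2.2 _ (hz.2.2.1 _ (hxz hRx)) _ hT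
            refine idealGen_down
              (idealGen_comp (mem_J_of_gen (Or.inl hRx)) (ihl hm' hc' _ hT')) ?_
            rintro ⟨a, b⟩ ⟨hab, c, h1, h2⟩
            exact ⟨c, h1, ⟨⟨a, h1, hab⟩, h2⟩⟩
          · have hRy : R ∈ y := (hm R (List.mem_cons_self (a := R) (l := l'))).resolve_left hRx
            by_cases hall : ∀ Q ∈ l', Q ∈ x
            · -- a single y-letter followed by x-letters
              have hB : lc l' ∈ x := lc_mem_of_forall_mem hx l' hall
              have hMz : compRel T (rv (lc l')) ∈ z :=
                hz.2.2.2 _ hT _ (hz.2.2.1 _ (hxz hB))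
              have hM : R ∩ compRel T (rv (lc l')) ∈ y ∩ z :=
                ⟨hy.1.2.1 R hRy _ inter_subset_left,
                 hz.1.2.1 _ hMz _ inter_subset_right⟩
              refine idealGen_down
                (idealGen_comp (mem_J_of_gen (Or.inr hM)) (mem_J_of_gen (Or.inl hB))) ?_
              rintro ⟨a, b⟩ ⟨hab, c, h1, h2⟩
              exact ⟨c, ⟨h1, ⟨b, hab, h2⟩⟩, h2⟩
            · -- the Day move
              obtain ⟨xs, S₂, rest, rfl, hxs, hS₂x⟩ := exists_split (· ∈ x) l' hall
              have hS₂y : S₂ ∈ y :=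
                (hm' S₂ (by simp)).resolve_left hS₂x
              have hrest : ∀ Q ∈ rest, Q ∈ x ∪ y := by
                intro Q hQ
                exact hm' Q (by simp [hQ])
              have hcnt2 : rest.countP (fun R => decide (R ∉ x)) + 1 ≤ n := by
                rw [List.countP_cons, List.countP_append, List.countP_cons] at hc
                have hxs0 : xs.countP (fun R => decide (R ∉ x)) = 0 := by
                  rw [List.countP_eq_zero]
                  intro Q hQ
                  simpa using hxs Q hQ
                have hRtrue : (decide (R ∉ x)) = true := by simpa using hRx
                have hS₂true : (decide (S₂ ∉ x)) = true := by simpa using hS₂x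
                rw [hxs0, if_pos hRtrue, if_pos hS₂true] at hc
                omega
              exact dayStep ops m hday hx hxc hy hyc hz hzc hxz ih R S₂ xs rest
                hRy hS₂y hxs hrest hcnt2 T hT

lemma sUnion_mem_z (hz : IsSuperEq z) (s : Finset (Set (A × A)))
    (h : ∀ C ∈ s, C ∈ z) : ⋃₀ (↑s : Set (Set (A × A))) ∈ z := by
  classical
  revert h
  induction s using Finset.induction_on with
  | empty => intro _; simpa using hz.1.2.1 idRel hz.2.1 ∅ (by simp)
  | @insert C s hCs ih =>
      intro h
      rw [Finset.coe_insert, sUnion_insert]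
      exact hz.1.2.2 _ (h C (by simp)) _ (ih fun Q hQ => h Q (by simp [hQ]))

end Aux6
theorem stmt15 (ops : ∀ i, (Fin (ar i) → A) → A) (m : ℕ → Term ι ar 4) (d : ℕ)
    (hday : DayTerms ops m d)
    (x y z : Set (Set (A × A)))
    (hx : IsSuperEq x) (hxc : seCompatible ops x)
    (hy : IsSuperEq y) (hyc : seCompatible ops y)
    (hz : IsSuperEq z) (hzc : seCompatible ops z)
    (hxz : x ⊆ z) :
    seJoin x (y ∩ z) = seJoin x y ∩ z := by
  classical
  ext T
  constructor
  · rintro ⟨s, hs1, hs2⟩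
    constructor
    · -- T ∈ seJoin x y
      refine ⟨s, ?_, hs2⟩
      intro C hC
      obtain ⟨l, hne, hmem, rfl⟩ := hs1 hC
      exact ⟨l, hne, fun R hR => (hmem R hR).imp id (fun h => h.1), rfl⟩
    · -- T ∈ z
      have hsz : ∀ C ∈ s, C ∈ z := by
        intro C hC
        obtain ⟨l, hne, hmem, rfl⟩ := hs1 hC
        rw [listComp_eq_lc]
        exact lc_mem_of_forall_mem hz l
          (fun R hR => (hmem R hR).elim (fun h => hxz h) (fun h => h.2))
      exact hz.1.2.1 _ (sUnion_mem_z hz s hsz) T hs2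
  · rintro ⟨⟨s, hs1, hs2⟩, hTz⟩
    -- T ∩ ⋃₀ s is in the join, by finite-union closure
    have hTs : T ∩ ⋃₀ (↑s : Set (Set (A × A))) ∈ seJoin x (y ∩ z) := by
      clear hs2
      induction s using Finset.induction_on with
      | empty =>
          refine idealGen_down (mem_J_of_gen (Or.inl hx.2.1)) ?_
          simp
      | @insert C s hCs ih =>
          rw [Finset.coe_insert, sUnion_insert, inter_union_distrib_left]
          refine idealGen_union ?_ (ih fun Q hQ => hs1 (by simp [hQ]))
          have hC : C ∈ comps (x ∪ y) := hs1 (by simp)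
          obtain ⟨l, hne, hmem, rfl⟩ := hC
          rw [listComp_eq_lc]
          exact dayMain ops m hday hx hxc hy hyc hz hzc hxz
            (l.countP (fun R => decide (R ∉ x))) l hmem le_rfl T hTz
    refine idealGen_down hTs ?_
    intro t ht
    exact ⟨ht, hs2 ht⟩
end

section
/- Let A be an algebra with a Mal'tsev term p. Then any two compatible superuniformities on A permute, and consequently the lattice of compatible superuniformities on A is modular. -/
open Filter Set

variable {α : Type*}

/-- Composition of filters of relations: the filter generated by compositions
of members. -/
def fComp (F G : Filter (α × α)) : Filter (α × α) :=
  F.lift fun U => G.lift' fun V => SetRel.comp U V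

/-- An ideal in the lattice of filters of relations (filters carry the
reverse-inclusion order, which is Mathlib's order on `Filter`): nonempty,
downward closed, and closed under finite joins. -/
def IsFilIdeal (ℰ : Set (Filter (α × α))) : Prop :=
  ℰ.Nonempty ∧ (∀ F ∈ ℰ, ∀ G ≤ F, G ∈ ℰ) ∧ (∀ F ∈ ℰ, ∀ G ∈ ℰ, F ⊔ G ∈ ℰ)

/-- A superuniformity: an ideal of filters of relations containing the
principal filter on the diagonal, closed under opposites of filters, and
closed under composition of filters. -/
def IsSuperUnif (ℰ : Set (Filter (α × α))) : Prop :=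
  IsFilIdeal ℰ ∧ 𝓟 (SetRel.id : SetRel α α) ∈ ℰ ∧ (∀ F ∈ ℰ, Filter.map Prod.swap F ∈ ℰ) ∧
    (∀ F ∈ ℰ, ∀ G ∈ ℰ, fComp F G ∈ ℰ)

/-- Composition of ideals of filters: the ideal generated by the filter
compositions of members (a directed family, hence the downward closure). -/
def filIdealComp (ℰ ℰ' : Set (Filter (α × α))) : Set (Filter (α × α)) :=
  {H | ∃ F ∈ ℰ, ∃ G ∈ ℰ', H ≤ fComp F G}

/-- Composition of a nonempty list of filters of relations. -/
def filListComp : List (Filter (α × α)) → Filter (α × α)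
  | [] => 𝓟 (SetRel.id : SetRel α α)
  | [F] => F
  | F :: G :: l => fComp F (filListComp (G :: l))

/-- The set of finite (nonempty) compositions of filters from `X`. -/
def filComps (X : Set (Filter (α × α))) : Set (Filter (α × α)) :=
  {H | ∃ l : List (Filter (α × α)), l ≠ [] ∧ (∀ F ∈ l, F ∈ X) ∧ H = filListComp l}

/-- The ideal of filters generated by a set `G` of filters: everything below a
finite join of members. -/
def filIdealGen (G : Set (Filter (α × α))) : Set (Filter (α × α)) :=
  {H | ∃ s : Finset (Filter (α × α)), ↑s ⊆ G ∧ H ≤ s.sup id}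

/-- The join of two superuniformities: the ideal generated by all finite
compositions of filters from their union. -/
def suJoin (ℰ ℰ' : Set (Filter (α × α))) : Set (Filter (α × α)) :=
  filIdealGen (filComps (ℰ ∪ ℰ'))

/-- The join of a family of superuniformities. -/
def suSup (S : Set (Set (Filter (α × α)))) : Set (Filter (α × α)) :=
  filIdealGen (filComps (⋃₀ S))

variable {A : Type*} {ι : Type*} {ar : ι → ℕ}

/-- The filter generated by the componentwise images of tuples of members of
filters under an `n`-ary operation. -/
def opFilter {A : Type*} {n : ℕ} (w : (Fin n → A) → A) (F : Fin n → Filter (A × A)) :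
    Filter (A × A) :=
  Filter.generate {T | ∃ S : Fin n → Set (A × A), (∀ k, S k ∈ F k) ∧ T = opImg w S}

/-- A set (ideal) of filters of relations on the algebra `(A, ops)` is
compatible if it is closed under the componentwise image filters of the basic
operations. -/
def suCompatible (ops : ∀ i, (Fin (ar i) → A) → A) (ℰ : Set (Filter (A × A))) : Prop :=
  ∀ i, ∀ F : Fin (ar i) → Filter (A × A), (∀ k, F k ∈ ℰ) → opFilter (ops i) F ∈ ℰ


section Aux

variable {A : Type*} {ι : Type*} {ar : ι → ℕ}

lemma cRel_mono {U V U' V' : Set (α × α)} (h1 : U ⊆ U') (h2 : V ⊆ V') :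
    SetRel.comp U V ⊆ SetRel.comp U' V' := by
  rintro ⟨x, z⟩ ⟨y, hxy, hyz⟩
  exact ⟨y, h1 hxy, h2 hyz⟩

lemma mem_fComp {F G : Filter (α × α)} {s : Set (α × α)} :
    s ∈ fComp F G ↔ ∃ U ∈ F, ∃ V ∈ G, SetRel.comp U V ⊆ s := by
  have hmono : Monotone (fun U : Set (α × α) => G.lift' fun V => SetRel.comp U V) := by
    intro U U' h
    exact Filter.lift'_mono' fun V _ => cRel_mono h subset_rfl
  have hmono2 : ∀ U : Set (α × α), Monotone (fun V : Set (α × α) => SetRel.comp U V) := by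
    intro U V V' h
    exact cRel_mono subset_rfl h
  constructor
  · intro hs
    rw [fComp, Filter.mem_lift_sets hmono] at hs
    obtain ⟨U, hU, hs⟩ := hs
    rw [Filter.mem_lift'_sets (hmono2 U)] at hs
    obtain ⟨V, hV, hs⟩ := hs
    exact ⟨U, hU, V, hV, hs⟩
  · rintro ⟨U, hU, V, hV, hs⟩
    rw [fComp, Filter.mem_lift_sets hmono]
    refine ⟨U, hU, ?_⟩
    rw [Filter.mem_lift'_sets (hmono2 U)]
    exact ⟨V, hV, hs⟩

lemma fComp_mono {F F' G G' : Filter (α × α)} (h1 : F ≤ F') (h2 : G ≤ G') :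
    fComp F G ≤ fComp F' G' := by
  intro s hs
  rw [mem_fComp] at hs ⊢
  obtain ⟨U, hU, V, hV, h⟩ := hs
  exact ⟨U, h1 hU, V, h2 hV, h⟩

lemma fComp_assoc (F G H : Filter (α × α)) :
    fComp (fComp F G) H = fComp F (fComp G H) := by
  ext s
  rw [mem_fComp, mem_fComp]
  constructor
  · rintro ⟨U', hU', W, hW, h⟩
    obtain ⟨U, hU, V, hV, h2⟩ := mem_fComp.1 hU'
    refine ⟨U, hU, SetRel.comp V W, mem_fComp.2 ⟨V, hV, W, hW, subset_rfl⟩, ?_⟩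
    calc SetRel.comp U (SetRel.comp V W) = SetRel.comp (SetRel.comp U V) W := (SetRel.comp_assoc _ _ _).symm
      _ ⊆ SetRel.comp U' W := cRel_mono h2 subset_rfl
      _ ⊆ s := h
  · rintro ⟨U, hU, V', hV', h⟩
    obtain ⟨V, hV, W, hW, h2⟩ := mem_fComp.1 hV'
    refine ⟨SetRel.comp U V, mem_fComp.2 ⟨U, hU, V, hV, subset_rfl⟩, W, hW, ?_⟩
    calc SetRel.comp (SetRel.comp U V) W = SetRel.comp U (SetRel.comp V W) := SetRel.comp_assoc _ _ _
      _ ⊆ SetRel.comp U V' := cRel_mono subset_rfl h2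
      _ ⊆ s := h

lemma le_fComp_right (F : Filter (α × α)) : F ≤ fComp F (𝓟 SetRel.id) := by
  intro s hs
  rw [mem_fComp] at hs
  obtain ⟨U, hU, V, hV, h⟩ := hs
  rw [Filter.mem_principal] at hV
  refine Filter.mem_of_superset hU (subset_trans ?_ h)
  rintro ⟨x, y⟩ hxy
  exact ⟨y, hxy, hV rfl⟩

lemma le_fComp_left (F : Filter (α × α)) : F ≤ fComp (𝓟 SetRel.id) F := by
  intro s hs
  rw [mem_fComp] at hs
  obtain ⟨U, hU, V, hV, h⟩ := hs
  rw [Filter.mem_principal] at hU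
  refine Filter.mem_of_superset hV (subset_trans ?_ h)
  rintro ⟨x, y⟩ hxy
  exact ⟨x, hU rfl, hxy⟩

lemma opImg_mono {n : ℕ} {w : (Fin n → A) → A} {R S : Fin n → Set (A × A)}
    (h : ∀ k, R k ⊆ S k) : opImg w R ⊆ opImg w S := by
  rintro p ⟨a, b, hab, rfl⟩
  exact ⟨a, b, fun k => h k (hab k), rfl⟩

lemma mem_opFilter {n : ℕ} {w : (Fin n → A) → A} {F : Fin n → Filter (A × A)}
    {U : Set (A × A)} :
    U ∈ opFilter w F ↔ ∃ S : Fin n → Set (A × A), (∀ k, S k ∈ F k) ∧ opImg w S ⊆ U := by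
  constructor
  · intro hU
    rw [opFilter, Filter.mem_generate_iff] at hU
    obtain ⟨ts, hts, htfin, hsub⟩ := hU
    classical
    choose! Sf hSf1 hSf2 using fun T (hT : T ∈ ts) => hts hT
    refine ⟨fun k => ⋂ T ∈ ts, Sf T k, ?_, ?_⟩
    · intro k
      exact (Filter.biInter_mem htfin).2 fun T hT => hSf1 T hT k
    · refine subset_trans ?_ hsub
      intro p hp
      rw [Set.mem_sInter]
      intro T hT
      rw [hSf2 T hT]
      refine opImg_mono (fun k => ?_) hp
      exact Set.biInter_subset_of_mem hT
  · rintro ⟨S, hS, hsub⟩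
    exact Filter.mem_of_superset (Filter.mem_generate_of_mem ⟨S, hS, rfl⟩) hsub

lemma termFilter_mem (ops : ∀ i, (Fin (ar i) → A) → A)
    {ℰ : Set (Filter (A × A))} (hE : IsSuperUnif ℰ) (hC : suCompatible ops ℰ)
    {n : ℕ} (s : Term ι ar n) (F : Fin n → Filter (A × A)) (hF : ∀ k, F k ∈ ℰ) :
    opFilter (fun v => Term.eval ops v s) F ∈ ℰ := by
  induction s with
  | var k =>
    refine hE.1.2.1 (F k) (hF k) _ ?_
    intro U hU
    rw [mem_opFilter]
    classical
    refine ⟨fun j => if h : j = k then U else Set.univ, fun j => ?_, ?_⟩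
    · by_cases h : j = k
      · subst h; simp [hU]
      · simp [h]
    · rintro p ⟨a, b, hab, rfl⟩
      have := hab k
      simpa [Term.eval] using this
  | app i ts ih =>
    have hG : ∀ j, opFilter (fun v => Term.eval ops v (ts j)) F ∈ ℰ := fun j => ih j
    refine hE.1.2.1 _ (hC i _ hG) _ ?_
    intro U hU
    rw [mem_opFilter] at hU ⊢
    obtain ⟨S, hS, hsub⟩ := hU
    choose R hR hRsub using fun j => mem_opFilter.1 (hS j)
    refine ⟨fun k => ⋂ j, R j k, fun k => Filter.iInter_mem.2 fun j => hR j k, ?_⟩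
    rintro p ⟨a, b, hab, rfl⟩
    apply hsub
    refine ⟨fun j => Term.eval ops a (ts j), fun j => Term.eval ops b (ts j),
      fun j => ?_, rfl⟩
    exact hRsub j ⟨a, b, fun k => Set.mem_iInter.1 (hab k) j, rfl⟩

lemma perm_sub (ops : ∀ i, (Fin (ar i) → A) → A) (t : Term ι ar 3)
    (ht1 : ∀ x y : A, t.eval ops ![x, x, y] = y)
    (ht2 : ∀ x y : A, t.eval ops ![x, y, y] = x)
    {ℰ ℰ' : Set (Filter (A × A))} (hE : IsSuperUnif ℰ) (hCE : suCompatible ops ℰ)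
    (hE' : IsSuperUnif ℰ') (hCE' : suCompatible ops ℰ') :
    filIdealComp ℰ ℰ' ⊆ filIdealComp ℰ' ℰ := by
  rintro H ⟨F, hF, G, hG, hH⟩
  have hF' : opFilter (fun v => Term.eval ops v t) ![𝓟 SetRel.id, 𝓟 SetRel.id, G] ∈ ℰ' := by
    refine termFilter_mem ops hE' hCE' t _ ?_
    intro k
    fin_cases k <;> simp [hE'.2.1, hG]
  have hG' : opFilter (fun v => Term.eval ops v t)
      ![𝓟 SetRel.id, Filter.map Prod.swap F, 𝓟 SetRel.id] ∈ ℰ := by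
    refine termFilter_mem ops hE hCE t _ ?_
    intro k
    fin_cases k <;> simp [hE.2.1, hE.2.2.1 F hF]
  refine ⟨_, hF', _, hG', le_trans hH ?_⟩
  intro s hs
  rw [mem_fComp] at hs ⊢
  obtain ⟨U, hU, V, hV, hsub⟩ := hs
  obtain ⟨SU, hSU, hSUsub⟩ := mem_opFilter.1 hU
  obtain ⟨SV, hSV, hSVsub⟩ := mem_opFilter.1 hV
  have hSU0 : SetRel.id ⊆ SU 0 := by simpa using hSU 0
  have hSU1 : SetRel.id ⊆ SU 1 := by simpa using hSU 1
  have hSU2 : SU 2 ∈ G := by simpa using hSU 2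
  have hSV0 : SetRel.id ⊆ SV 0 := by simpa using hSV 0
  have hSV1 : Prod.swap ⁻¹' (SV 1) ∈ F := by
    have := hSV 1
    simpa [Filter.mem_map] using this
  have hSV2 : SetRel.id ⊆ SV 2 := by simpa using hSV 2
  refine ⟨Prod.swap ⁻¹' (SV 1), hSV1, SU 2, hSU2, ?_⟩
  rintro ⟨x, z⟩ ⟨y, hxy, hyz⟩
  apply hsub
  refine ⟨Term.eval ops ![x, y, z] t, ?_, ?_⟩
  · apply hSUsub
    refine ⟨![x, y, y], ![x, y, z], fun k => ?_, ?_⟩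
    · fin_cases k
      · exact hSU0 rfl
      · exact hSU1 rfl
      · exact hyz
    · have : Term.eval ops ![x, y, y] t = x := ht2 x y
      simp [this]
  · apply hSVsub
    refine ⟨![x, y, z], ![x, x, z], fun k => ?_, ?_⟩
    · fin_cases k
      · exact hSV0 rfl
      · exact hxy
      · exact hSV2 rfl
    · have : Term.eval ops ![x, x, z] t = z := ht1 x z
      simp [this]

lemma modular_comp {x y z : Set (Filter (α × α))} (hx : IsSuperUnif x)
    (hy : IsSuperUnif y) (hz : IsSuperUnif z) (hxz : x ⊆ z) :
    filIdealComp x (y ∩ z) = filIdealComp x y ∩ z := by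
  ext H
  constructor
  · rintro ⟨F, hF, G, ⟨hGy, hGz⟩, hH⟩
    exact ⟨⟨F, hF, G, hGy, hH⟩, hz.1.2.1 _ (hz.2.2.2 F (hxz hF) G hGz) H hH⟩
  · rintro ⟨⟨F, hF, G, hGy, hH⟩, hHz⟩
    refine ⟨F, hF, G ⊓ fComp (Filter.map Prod.swap F) H,
      ⟨hy.1.2.1 G hGy _ inf_le_left,
       hz.1.2.1 _ (hz.2.2.2 _ (hz.2.2.1 F (hxz hF)) H hHz) _ inf_le_right⟩, ?_⟩
    intro s hs
    rw [mem_fComp] at hs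
    obtain ⟨U, hU, V', hV', hsub⟩ := hs
    rw [Filter.mem_inf_iff] at hV'
    obtain ⟨S, hS, C, hC, rfl⟩ := hV'
    obtain ⟨W, hW, T, hT, hCsub⟩ := mem_fComp.1 hC
    rw [Filter.mem_map] at hW
    have hmem : SetRel.comp (U ∩ Prod.swap ⁻¹' W) S ∩ T ∈ H := by
      refine Filter.inter_mem ?_ hT
      exact hH (mem_fComp.2 ⟨_, Filter.inter_mem hU hW, S, hS, subset_rfl⟩)
    refine Filter.mem_of_superset hmem ?_
    rintro ⟨a, b⟩ ⟨⟨c, ⟨hac1, hac2⟩, hcb⟩, habT⟩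
    exact hsub ⟨c, hac1, hcb, hCsub ⟨a, hac2, habT⟩⟩

lemma inter_superUnif {y z : Set (Filter (α × α))} (hy : IsSuperUnif y)
    (hz : IsSuperUnif z) : IsSuperUnif (y ∩ z) :=
  ⟨⟨⟨𝓟 SetRel.id, hy.2.1, hz.2.1⟩,
    fun F hF G hG => ⟨hy.1.2.1 F hF.1 G hG, hz.1.2.1 F hF.2 G hG⟩,
    fun F hF G hG => ⟨hy.1.2.2 F hF.1 G hG.1, hz.1.2.2 F hF.2 G hG.2⟩⟩,
   ⟨hy.2.1, hz.2.1⟩,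
   fun F hF => ⟨hy.2.2.1 F hF.1, hz.2.2.1 F hF.2⟩,
   fun F hF G hG => ⟨hy.2.2.2 F hF.1 G hG.1, hz.2.2.2 F hF.2 G hG.2⟩⟩

lemma inter_compat (ops : ∀ i, (Fin (ar i) → A) → A) {y z : Set (Filter (A × A))}
    (hy : suCompatible ops y) (hz : suCompatible ops z) :
    suCompatible ops (y ∩ z) :=
  fun i F hF => ⟨hy i F fun k => (hF k).1, hz i F fun k => (hF k).2⟩

lemma listComp_le {E E' : Set (Filter (α × α))} (hE : IsSuperUnif E)
    (hE' : IsSuperUnif E') (hperm : filIdealComp E' E ⊆ filIdealComp E E') :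
    ∀ l : List (Filter (α × α)), l ≠ [] → (∀ F ∈ l, F ∈ E ∪ E') →
      ∃ F ∈ E, ∃ G ∈ E', filListComp l ≤ fComp F G := by
  intro l
  induction l with
  | nil => intro h; exact absurd rfl h
  | cons F₀ l ih =>
    intro _ hmem
    cases l with
    | nil =>
      rcases hmem F₀ (by simp) with h | h
      · exact ⟨F₀, h, 𝓟 SetRel.id, hE'.2.1, le_fComp_right F₀⟩
      · exact ⟨𝓟 SetRel.id, hE.2.1, F₀, h, le_fComp_left F₀⟩
    | cons G₀ l' =>
      obtain ⟨F, hF, G, hG, hle⟩ :=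
        ih (by simp) (fun P hP => hmem P (List.mem_cons_of_mem _ hP))
      have h2 : filListComp (F₀ :: G₀ :: l') ≤ fComp F₀ (fComp F G) := by
        show fComp F₀ (filListComp (G₀ :: l')) ≤ _
        exact fComp_mono le_rfl hle
      rcases hmem F₀ (by simp) with h | h
      · exact ⟨fComp F₀ F, hE.2.2.2 F₀ h F hF, G, hG,
          h2.trans (fComp_assoc F₀ F G).ge⟩
      · obtain ⟨F', hF', G', hG', hle'⟩ := hperm ⟨F₀, h, F, hF, le_rfl⟩
        refine ⟨F', hF', fComp G' G, hE'.2.2.2 G' hG' G hG, ?_⟩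
        calc filListComp (F₀ :: G₀ :: l') ≤ fComp F₀ (fComp F G) := h2
          _ = fComp (fComp F₀ F) G := (fComp_assoc F₀ F G).symm
          _ ≤ fComp (fComp F' G') G := fComp_mono hle' le_rfl
          _ = fComp F' (fComp G' G) := fComp_assoc F' G' G

lemma suJoin_eq {E E' : Set (Filter (α × α))} (hE : IsSuperUnif E)
    (hE' : IsSuperUnif E') (hperm : filIdealComp E' E ⊆ filIdealComp E E') :
    suJoin E E' = filIdealComp E E' := by
  classical
  ext H
  constructor
  · rintro ⟨s, hs, hle⟩
    have key : ∀ s : Finset (Filter (α × α)), ↑s ⊆ filComps (E ∪ E') →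
        ∃ F ∈ E, ∃ G ∈ E', s.sup id ≤ fComp F G := by
      intro s
      induction s using Finset.induction_on with
      | empty => exact fun _ => ⟨𝓟 SetRel.id, hE.2.1, 𝓟 SetRel.id, hE'.2.1, bot_le⟩
      | @insert a s ha ihs =>
        intro hsub
        obtain ⟨F1, hF1, G1, hG1, h1⟩ := ihs (fun Q hQ => hsub (by simp [hQ]))
        obtain ⟨l, hl, hlmem, hleq⟩ := hsub (by simp : a ∈ (↑(insert a s) : Set _))
        obtain ⟨Fa, hFa, Ga, hGa, ha2⟩ := listComp_le hE hE' hperm l hl hlmem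
        refine ⟨Fa ⊔ F1, hE.1.2.2 Fa hFa F1 hF1, Ga ⊔ G1, hE'.1.2.2 Ga hGa G1 hG1, ?_⟩
        rw [Finset.sup_insert]
        refine sup_le ?_ ?_
        · show a ≤ _
          rw [hleq]
          exact ha2.trans (fComp_mono le_sup_left le_sup_left)
        · exact h1.trans (fComp_mono le_sup_right le_sup_right)
    obtain ⟨F, hF, G, hG, h⟩ := key s hs
    exact ⟨F, hF, G, hG, hle.trans h⟩
  · rintro ⟨F, hF, G, hG, hle⟩
    refine ⟨{fComp F G}, ?_, by simpa using hle⟩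
    intro Q hQ
    simp only [Finset.coe_singleton, Set.mem_singleton_iff] at hQ
    subst hQ
    refine ⟨[F, G], by simp, ?_, rfl⟩
    intro P hP
    rcases List.mem_pair.1 hP with rfl | rfl
    · exact Or.inl hF
    · exact Or.inr hG

end Aux

theorem stmt17 (ops : ∀ i, (Fin (ar i) → A) → A) (t : Term ι ar 3)
    (ht1 : ∀ x y : A, t.eval ops ![x, x, y] = y)
    (ht2 : ∀ x y : A, t.eval ops ![x, y, y] = x) :
    (∀ ℰ ℰ' : Set (Filter (A × A)), IsSuperUnif ℰ → suCompatible ops ℰ →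
      IsSuperUnif ℰ' → suCompatible ops ℰ' →
      filIdealComp ℰ ℰ' = filIdealComp ℰ' ℰ) ∧
    (∀ x y z : Set (Filter (A × A)),
      IsSuperUnif x → suCompatible ops x →
      IsSuperUnif y → suCompatible ops y →
      IsSuperUnif z → suCompatible ops z →
      x ⊆ z → suJoin x (y ∩ z) = suJoin x y ∩ z) := by
  have perm : ∀ ℰ ℰ' : Set (Filter (A × A)), IsSuperUnif ℰ → suCompatible ops ℰ →
      IsSuperUnif ℰ' → suCompatible ops ℰ' →
      filIdealComp ℰ ℰ' = filIdealComp ℰ' ℰ := by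
    intro ℰ ℰ' h1 h2 h3 h4
    exact Set.Subset.antisymm (perm_sub ops t ht1 ht2 h1 h2 h3 h4)
      (perm_sub ops t ht1 ht2 h3 h4 h1 h2)
  refine ⟨perm, ?_⟩
  intro x y z hx hcx hy hcy hz hcz hxz
  have hyz := inter_superUnif hy hz
  have hcyz := inter_compat ops hcy hcz
  rw [suJoin_eq hx hyz (perm (y ∩ z) x hyz hcyz hx hcx).subset,
    suJoin_eq hx hy (perm y x hy hcy hx hcx).subset,
    modular_comp hx hy hz hxz]
end
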